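/- arXiv:2509.20076 — 3 statements merged into one kernel-verified Lean document; each statement's English description precedes it below -/
import Mathlib

section
/- For all real numbers α > 0 and β with α² + (β + 7/2)² = (3/2)², one has 5(α² + β²) + 33β + 50 = −2β > 0. Consequently the BMT quadratic form of the quintic genus 2 class (1, 0, −5, 11) is strictly positive along the smallest wall W(−7/2, 3/2); equivalently, W(−7/2, 3/2) lies strictly outside the BMT semicircle α² + (β + 33/10)² = 89/100 (this is the computation behind Proposition 5.1: the Bridgeland moduli space in the chamber below the smallest wall is empty). -/
/-- Along the smallest wall `W(-7/2, 3/2)`, the BMT quadratic form of the quintic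
genus 2 class `(1, 0, -5, 11)` equals `-2β` and is strictly positive; hence the
wall lies strictly outside the BMT semicircle and the Bridgeland moduli space in
the chamber below the smallest wall is empty. -/
theorem BMT_positive_on_first_wall (α β : ℝ) (hα : 0 < α)
    (hW : α ^ 2 + (β + 7 / 2) ^ 2 = (3 / 2) ^ 2) :
    5 * (α ^ 2 + β ^ 2) + 33 * β + 50 = -2 * β ∧ 0 < -2 * β := by
  constructor
  · nlinarith [sq_nonneg α, sq_nonneg (β + 7/2)]
  · nlinarith [sq_nonneg α, sq_nonneg (β + 7/2), sq_nonneg (β + 2)]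
end

section
/- Let a, b, c be integers with a ≥ 1 and b ∈ {1, 2}, satisfying: (i) b² − 10 ≤ a·c ≤ b²; (ii) there exists a real α > 0 with (3a − b)·α² = 3c + b; and (iii) 6b − 6ab + 9a(a − 1) + b² − c is even. Then exactly one of the following holds: (a, b, c) = (1, 1, 1); or b = 2 and c = 0 (with a ≥ 1 arbitrary); or b = 2, c = 2 and a ∈ {1, 2}; or (a, b, c) = (1, 2, 4). -/
/-- Case `(a, b, c) = (1, 1, 1)`. -/
def CaseOne (a b c : ℤ) : Prop := a = 1 ∧ b = 1 ∧ c = 1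

/-- Case `b = 2`, `c = 0` (with `a ≥ 1` arbitrary). -/
def CaseTwo (_a b c : ℤ) : Prop := b = 2 ∧ c = 0

/-- Case `b = 2`, `c = 2`, `a ∈ {1, 2}`. -/
def CaseThree (a b c : ℤ) : Prop := b = 2 ∧ c = 2 ∧ (a = 1 ∨ a = 2)

/-- Case `(a, b, c) = (1, 2, 4)`. -/
def CaseFour (a b c : ℤ) : Prop := a = 1 ∧ b = 2 ∧ c = 4

/-- Arithmetic core of Proposition 3.1: classification of the integer solutions
`(a, b, c)` satisfying the Bogomolov inequalities, the wall condition along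
`β = -3`, and the integrality of the second Chern class. Exactly one of the four
cases holds. -/
theorem wall_integer_classification (a b c : ℤ) (ha : 1 ≤ a) (hb : b = 1 ∨ b = 2)
    (hΔ₁ : b ^ 2 - 10 ≤ a * c) (hΔ₂ : a * c ≤ b ^ 2)
    (hwall : ∃ α : ℝ, 0 < α ∧
      (3 * (a : ℝ) - (b : ℝ)) * α ^ 2 = 3 * (c : ℝ) + (b : ℝ))
    (hc₂ : Even (6 * b - 6 * a * b + 9 * a * (a - 1) + b ^ 2 - c)) :
    (CaseOne a b c ∨ CaseTwo a b c ∨ CaseThree a b c ∨ CaseFour a b c) ∧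
      ¬(CaseOne a b c ∧ CaseTwo a b c) ∧ ¬(CaseOne a b c ∧ CaseThree a b c) ∧
      ¬(CaseOne a b c ∧ CaseFour a b c) ∧ ¬(CaseTwo a b c ∧ CaseThree a b c) ∧
      ¬(CaseTwo a b c ∧ CaseFour a b c) ∧ ¬(CaseThree a b c ∧ CaseFour a b c) := by

  -- From the wall condition: 3c + b > 0
  obtain ⟨α, hα, heq⟩ := hwall
  have hb2 : (b : ℝ) ≤ 2 := by rcases hb with h | h <;> simp [h]
  have ha1 : (1 : ℝ) ≤ (a : ℝ) := by exact_mod_cast ha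
  have h3ab : (0 : ℝ) < 3 * (a : ℝ) - (b : ℝ) := by linarith
  have hposR : (0 : ℝ) < 3 * (c : ℝ) + (b : ℝ) := by
    rw [← heq]; positivity
  have hpos : 0 < 3 * c + b := by exact_mod_cast hposR
  -- parity bookkeeping
  have heven : Even ((a - 1) * a) := by
    have := Int.even_mul_succ_self (a - 1)
    simpa using this
  obtain ⟨m, hm⟩ := heven
  obtain ⟨k, hk⟩ := hc₂
  have hk' : 6 * b - 6 * a * b + 9 * ((a - 1) * a) + b ^ 2 - c = k + k := by
    linear_combination hk
  rw [hm] at hk'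
  constructor
  · rcases hb with rfl | rfl
    · -- b = 1 : c odd, c ≥ 1, a*c ≤ 1 ⇒ a = c = 1
      have hc1 : 1 ≤ c := by omega
      have hac : a ≤ a * c := by nlinarith
      have ha' : a = 1 := by nlinarith
      have hc' : c = 1 := by subst ha'; omega
      exact Or.inl ⟨ha', rfl, hc'⟩
    · -- b = 2 : c even, c ≥ 0, a*c ≤ 4
      have hc0 : 0 ≤ c := by omega
      have hac : c ≤ a * c := by nlinarith
      have hc4 : c ≤ 4 := by omega
      interval_cases c
      · exact Or.inr (Or.inl ⟨rfl, rfl⟩)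
      · omega
      · refine Or.inr (Or.inr (Or.inl ⟨rfl, rfl, ?_⟩)); omega
      · omega
      · have : a = 1 := by omega
        exact Or.inr (Or.inr (Or.inr ⟨this, rfl, rfl⟩))
  · simp only [CaseOne, CaseTwo, CaseThree, CaseFour, not_and]
    omega
end

section
/- Let v = (r, c, d) be a triple of real numbers with r ≠ 0 and c² − 2rd ≥ 0. Suppose (K, L, M) and (K′, L′, M′) are nonzero triples of real numbers satisfying 2Kd + Lc + Mr = 0 and 2K′d + L′c + M′r = 0, and suppose there exists a point (α₀, β₀) with α₀ > 0 such that K(α₀² + β₀²) + Lβ₀ + M = 0 and K′(α₀² + β₀²) + L′β₀ + M′ = 0. Then (K′, L′, M′) = t·(K, L, M) for some nonzero real t. Consequently, two numerical walls for a fixed class v with nonnegative discriminant that pass through a common point of the upper half-plane coincide: the numerical walls for v form two nested families of semicircles. -/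
/-- Nested-wall property: two numerical walls for a fixed class `v = (r, c, d)`
with `r ≠ 0` and nonnegative discriminant `c² - 2rd ≥ 0` that pass through a
common point of the upper half-plane coincide; i.e. their coefficient triples
`(K, L, M)` (satisfying the linear relation `2Kd + Lc + Mr = 0`) are
proportional. -/
theorem numerical_walls_nested (r c d : ℝ) (hr : r ≠ 0)
    (hΔ : 0 ≤ c ^ 2 - 2 * r * d)
    (K L M K' L' M' : ℝ)
    (hKLM : ¬(K = 0 ∧ L = 0 ∧ M = 0)) (hKLM' : ¬(K' = 0 ∧ L' = 0 ∧ M' = 0))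
    (hrel : 2 * K * d + L * c + M * r = 0)
    (hrel' : 2 * K' * d + L' * c + M' * r = 0)
    (α₀ β₀ : ℝ) (hα₀ : 0 < α₀)
    (hpt : K * (α₀ ^ 2 + β₀ ^ 2) + L * β₀ + M = 0)
    (hpt' : K' * (α₀ ^ 2 + β₀ ^ 2) + L' * β₀ + M' = 0) :
    ∃ t : ℝ, t ≠ 0 ∧ K' = t * K ∧ L' = t * L ∧ M' = t * M := by
  set s : ℝ := α₀ ^ 2 + β₀ ^ 2 with hs
  have hM : M = -(K * s + L * β₀) := by linarith
  have hM' : M' = -(K' * s + L' * β₀) := by linarith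
  set A : ℝ := 2 * d - r * s with hA
  set B : ℝ := c - r * β₀ with hB
  have h1 : K * A + L * B = 0 := by
    have := hrel
    rw [hM] at this
    simp only [hA, hB]
    nlinarith [this]
  have h2 : K' * A + L' * B = 0 := by
    have := hrel'
    rw [hM'] at this
    simp only [hA, hB]
    nlinarith [this]
  have hr2 : 0 < r * r := mul_self_pos.mpr hr
  have hAB : ¬(A = 0 ∧ B = 0) := by
    rintro ⟨ha, hb⟩
    have hc : c = r * β₀ := by simp [hB] at hb; linarith
    have hd : 2 * d = r * s := by simp [hA] at ha; linarith
    have hα2 : 0 < α₀ ^ 2 := by positivity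
    have e : c ^ 2 - 2 * r * d = -(r * r * α₀ ^ 2) := by
      linear_combination (c + r * β₀) * hc - r * hd - (r * r) * hs
    linarith [mul_pos hr2 hα2]
  by_cases hBz : B = 0
  · have hAz : A ≠ 0 := fun h => hAB ⟨h, hBz⟩
    have hK : K = 0 := by
      have : K * A = 0 := by rw [hBz] at h1; linarith
      exact (mul_eq_zero.mp this).resolve_right hAz
    have hK' : K' = 0 := by
      have : K' * A = 0 := by rw [hBz] at h2; linarith
      exact (mul_eq_zero.mp this).resolve_right hAz
    have hL : L ≠ 0 := by
      intro hL0
      exact hKLM ⟨hK, hL0, by rw [hM, hK, hL0]; ring⟩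
    have hL' : L' ≠ 0 := by
      intro hL0
      exact hKLM' ⟨hK', hL0, by rw [hM', hK', hL0]; ring⟩
    refine ⟨L' / L, div_ne_zero hL' hL, ?_, ?_, ?_⟩
    · rw [hK, hK']; ring
    · field_simp
    · rw [hM, hM', hK, hK']; field_simp; ring
  · have hK : K ≠ 0 := by
      intro hK0
      have hL0 : L = 0 := by
        have : L * B = 0 := by rw [hK0] at h1; linarith
        exact (mul_eq_zero.mp this).resolve_right hBz
      exact hKLM ⟨hK0, hL0, by rw [hM, hK0, hL0]; ring⟩
    have hK' : K' ≠ 0 := by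
      intro hK0
      have hL0 : L' = 0 := by
        have : L' * B = 0 := by rw [hK0] at h2; linarith
        exact (mul_eq_zero.mp this).resolve_right hBz
      exact hKLM' ⟨hK0, hL0, by rw [hM', hK0, hL0]; ring⟩
    have hLK : L' * K = K' * L := by
      have e1 : L * B = -(K * A) := by linarith
      have e2 : L' * B = -(K' * A) := by linarith
      have : L' * K * B = K' * L * B := by linear_combination K * e2 - K' * e1
      exact mul_right_cancel₀ hBz this
    refine ⟨K' / K, div_ne_zero hK' hK, ?_, ?_, ?_⟩
    · field_simp
    · field_simp; linarith [hLK]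
    · rw [hM, hM']
      have hL' : L' = K' / K * L := by field_simp; linarith [hLK]
      rw [hL']; field_simp
end
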